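/- Let {J'^a_n} be a level-k representation of affine sl(2) on W, and let {J^a_n} be a level-k representation on V admitting a subspace V₀ ⊆ V with J^a_n(V₀) = 0 for all n ≥ 1 and J^a₀(V₀) ⊆ V₀ (a ∈ {0,+,−}), and such that V is free over the negative modes: there exist an enumeration X₁, X₂, X₃, … of the family {J^a_{−n} : a ∈ {0,+,−}, n ≥ 1} and a basis {v_t} of V₀ such that the vectors X_{i₁} X_{i₂} ⋯ X_{i_r} v_t, over all t and all finite non-increasing index sequences i₁ ≥ i₂ ≥ ⋯ ≥ i_r (r ≥ 0), form a basis of V. Then restriction of functionals, β ↦ β|_{V₀ ⊗ W}, is a linear isomorphism from the space of β ∈ (V ⊗ W)* satisfying β ∘ (J^a_n ⊗ id + id ⊗ J'^a_{−n}) = 0 for all a and all n ∈ ℤ, onto the space of ψ ∈ (V₀ ⊗ W)* satisfying ψ ∘ (J^a₀ ⊗ id + id ⊗ J'^a₀) = 0 and ψ ∘ (id ⊗ J'^a_{−m}) = 0 for all a ∈ {0,+,−} and all m ≥ 1. -/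

import Mathlib

/-!
Level-`k` representations of affine `sl(2)`.

A level-`k` representation of affine `sl(2)` on a complex vector space `V` is a
family of linear endomorphisms `J⁰_n, J⁺_n, J⁻_n` (`n ∈ ℤ`) satisfying
`[J⁺_m, J⁻_n] = J⁰_{m+n} + k·m·δ_{m+n,0}·id`, `[J⁰_m, J^±_n] = ±2 J^±_{m+n}`,
`[J⁰_m, J⁰_n] = 2k·m·δ_{m+n,0}·id`, `[J⁺_m, J⁺_n] = [J⁻_m, J⁻_n] = 0`.

For `s ∈ ℤ`, the spectral flow `ϑ_s` replaces `J^±_n` by `J^±_{n∓s}` and `J⁰_n` by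
`J⁰_n − s·k·δ_{n,0}·id`.
-/

noncomputable section

/-- a family of operators `J⁰_n, J⁺_n, J⁻_n` (`n ∈ ℤ`) on `V` -/
structure AffineFamily (V : Type*) [AddCommGroup V] [Module ℂ V] where
  Jz : ℤ → Module.End ℂ V
  Jp : ℤ → Module.End ℂ V
  Jm : ℤ → Module.End ℂ V

variable {V W : Type*}

/-- the commutation relations making an `AffineFamily` a level-`k` representation of
affine `sl(2)` -/
def IsLevelRep [AddCommGroup V] [Module ℂ V] (k : ℂ) (ρ : AffineFamily V) : Prop :=
  (∀ m n : ℤ, ρ.Jp m * ρ.Jm n - ρ.Jm n * ρ.Jp m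
      = ρ.Jz (m + n) + (if m + n = 0 then k * (m : ℂ) else 0) • 1) ∧
  (∀ m n : ℤ, ρ.Jz m * ρ.Jp n - ρ.Jp n * ρ.Jz m = (2 : ℂ) • ρ.Jp (m + n)) ∧
  (∀ m n : ℤ, ρ.Jz m * ρ.Jm n - ρ.Jm n * ρ.Jz m = (-2 : ℂ) • ρ.Jm (m + n)) ∧
  (∀ m n : ℤ, ρ.Jz m * ρ.Jz n - ρ.Jz n * ρ.Jz m
      = (if m + n = 0 then 2 * k * (m : ℂ) else 0) • 1) ∧
  (∀ m n : ℤ, ρ.Jp m * ρ.Jp n = ρ.Jp n * ρ.Jp m) ∧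
  (∀ m n : ℤ, ρ.Jm m * ρ.Jm n = ρ.Jm n * ρ.Jm m)

/-- the spectral flow `ϑ_s` of a level-`k` family:
`J^±_n ↦ J^±_{n∓s}`, `J⁰_n ↦ J⁰_n − s·k·δ_{n,0}·id` -/
def flow [AddCommGroup V] [Module ℂ V] (k : ℂ) (s : ℤ) (ρ : AffineFamily V) :
    AffineFamily V where
  Jz n := ρ.Jz n - (if n = 0 then (s : ℂ) * k else 0) • 1
  Jp n := ρ.Jp (n - s)
  Jm n := ρ.Jm (n + s)

open TensorProduct

/-- the negative-mode operators `{J^a_{−n} : a ∈ {0,+,−}, n ≥ 1}` of a family,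
labelled by `Fin 3 × ℕ` (the label `(a, n)` corresponds to the mode `−(n+1)`) -/
def negMode [AddCommGroup V] [Module ℂ V] (ρ : AffineFamily V) (p : Fin 3 × ℕ) :
    Module.End ℂ V :=
  if p.1 = 0 then ρ.Jz (-((p.2 : ℤ) + 1))
  else if p.1 = 1 then ρ.Jp (-((p.2 : ℤ) + 1))
  else ρ.Jm (-((p.2 : ℤ) + 1))

section Aux
variable {V W : Type*}

/-- uniform access to the three families of modes -/
def mode [AddCommGroup V] [Module ℂ V] (σ : AffineFamily V) (a : Fin 3) (n : ℤ) :
    Module.End ℂ V :=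
  ![σ.Jz, σ.Jp, σ.Jm] a n

lemma negMode_eq_mode [AddCommGroup V] [Module ℂ V] (σ : AffineFamily V) (p : Fin 3 × ℕ) :
    negMode σ p = mode σ p.1 (-((p.2 : ℤ) + 1)) := by
  rcases p with ⟨a, m⟩
  fin_cases a <;> simp [negMode, mode]

/-- structure constants -/
def sC : Fin 3 → Fin 3 → ℂ := ![![0, 2, -2], ![-2, 0, 1], ![2, -1, 0]]
def sA : Fin 3 → Fin 3 → Fin 3 := ![![0, 1, 2], ![1, 0, 0], ![2, 0, 0]]
def sK : Fin 3 → Fin 3 → ℂ := ![![2, 0, 0], ![0, 0, 1], ![0, 1, 0]]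

lemma sC_anti (a b : Fin 3) : sC b a = - sC a b := by
  fin_cases a <;> fin_cases b <;> norm_num [sC]

lemma sA_symm (a b : Fin 3) : sA b a = sA a b := by
  fin_cases a <;> fin_cases b <;> norm_num [sA]

lemma sK_symm (a b : Fin 3) : sK b a = sK a b := by
  fin_cases a <;> fin_cases b <;> norm_num [sK]

/-- the universal bracket formula -/
def HasBracket [AddCommGroup V] [Module ℂ V] (k : ℂ) (σ : AffineFamily V) : Prop :=
  ∀ (a b : Fin 3) (m n : ℤ),
    mode σ a m * mode σ b n - mode σ b n * mode σ a m
      = sC a b • mode σ (sA a b) (m + n)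
        + (if m + n = 0 then sK a b * k * (m : ℂ) else 0) • 1

lemma IsLevelRep.hasBracket [AddCommGroup V] [Module ℂ V] {k : ℂ} {σ : AffineFamily V}
    (h : IsLevelRep k σ) : HasBracket k σ := by
  obtain ⟨h1, h2, h3, h4, h5, h6⟩ := h
  intro a b m n
  fin_cases a <;> fin_cases b <;>
    simp only [mode, sC, sA, sK,
      show ((⟨0, by omega⟩ : Fin 3)) = 0 from rfl,
      show ((⟨1, by omega⟩ : Fin 3)) = 1 from rfl,
      show ((⟨2, by omega⟩ : Fin 3)) = 2 from rfl,
      Matrix.cons_val_zero, Matrix.cons_val_one, Matrix.head_cons,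
      Matrix.cons_val_two, Matrix.tail_cons]
  · rw [h4 m n]; split <;> simp <;> ring_nf
  · rw [h2 m n]; simp
  · rw [h3 m n]; simp
  · have := h2 n m
    rw [show σ.Jp m * σ.Jz n - σ.Jz n * σ.Jp m
        = -(σ.Jz n * σ.Jp m - σ.Jp m * σ.Jz n) by abel, this, show n + m = m + n by ring]
    simp
  · rw [sub_eq_zero.2 (h5 m n)]; simp
  · rw [h1 m n]; split <;> simp <;> ring_nf
  · have := h3 n m
    rw [show σ.Jm m * σ.Jz n - σ.Jz n * σ.Jm m
        = -(σ.Jz n * σ.Jm m - σ.Jm m * σ.Jz n) by abel, this, show n + m = m + n by ring]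
    simp
  · have := h1 n m
    rw [show σ.Jm m * σ.Jp n - σ.Jp n * σ.Jm m
        = -(σ.Jp n * σ.Jm m - σ.Jm m * σ.Jp n) by abel, this, show n + m = m + n by ring]
    split
    · rename_i hmn
      rw [show (n : ℂ) = -(m : ℂ) by push_cast [show n = -m by omega]; ring]
      simp; ring_nf; abel
    · simp
  · rw [sub_eq_zero.2 (h6 m n)]; simp

end Aux
section Aux2
variable {V W : Type*}

lemma negMode_bracket [AddCommGroup V] [Module ℂ V] {k : ℂ} (σ : AffineFamily V)
    (h : HasBracket k σ) (p q : Fin 3 × ℕ) :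
    negMode σ p * negMode σ q
      = negMode σ q * negMode σ p
        + sC p.1 q.1 • negMode σ (sA p.1 q.1, p.2 + q.2 + 1) := by
  have H := h p.1 q.1 (-((p.2 : ℤ) + 1)) (-((q.2 : ℤ) + 1))
  rw [if_neg (by omega), zero_smul, add_zero,
    show (-((p.2 : ℤ) + 1)) + (-((q.2 : ℤ) + 1)) = -(((p.2 + q.2 + 1 : ℕ) : ℤ) + 1) by
      push_cast; ring] at H
  rw [negMode_eq_mode, negMode_eq_mode, negMode_eq_mode, sub_eq_iff_eq_add] at *
  rw [H]; abel

/-- contragredient family on the dual, with modes negated -/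
def dualFam [AddCommGroup W] [Module ℂ W] (σ : AffineFamily W) :
    AffineFamily (Module.Dual ℂ W) where
  Jz n := - (σ.Jz (-n)).dualMap
  Jp n := - (σ.Jp (-n)).dualMap
  Jm n := - (σ.Jm (-n)).dualMap

lemma mode_dualFam [AddCommGroup W] [Module ℂ W] (σ : AffineFamily W) (a : Fin 3) (n : ℤ) :
    mode (dualFam σ) a n = - (mode σ a (-n)).dualMap := by
  fin_cases a <;> rfl

lemma mode_dualFam_apply [AddCommGroup W] [Module ℂ W] (σ : AffineFamily W) (a : Fin 3)
    (n : ℤ) (φ : Module.Dual ℂ W) (w : W) :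
    mode (dualFam σ) a n φ w = - φ (mode σ a (-n) w) := by
  rw [mode_dualFam]; rfl

lemma HasBracket.dual [AddCommGroup W] [Module ℂ W] {k : ℂ} {σ : AffineFamily W}
    (h : HasBracket k σ) : HasBracket k (dualFam σ) := by
  intro a b m n
  ext φ w
  have H := congrArg φ (LinearMap.congr_fun (h b a (-n) (-m)) w)
  simp only [LinearMap.sub_apply, LinearMap.add_apply, LinearMap.smul_apply,
    Module.End.mul_apply, Module.End.one_apply, map_sub, map_add, map_smul, smul_eq_mul] at H
  simp only [LinearMap.sub_apply, LinearMap.add_apply, LinearMap.smul_apply,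
    Module.End.mul_apply, Module.End.one_apply, smul_eq_mul, mode_dualFam_apply,
    map_neg, neg_neg]
  rw [sC_anti a b, sA_symm a b, sK_symm a b,
    show -n + -m = -(m + n) by ring] at H
  by_cases hmn : m + n = 0
  · rw [if_pos (show -(m + n) = 0 by omega)] at H
    push_cast at H
    rw [if_pos hmn, show (m : ℂ) = -(n : ℂ) by rw [show m = -n by omega]; push_cast; ring]
    linear_combination H
  · rw [if_neg (show ¬ -(m + n) = 0 by omega)] at H
    rw [if_neg hmn]
    linear_combination H
end Aux2
section Aux3
variable {V : Type*} [AddCommGroup V] [Module ℂ V]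

/-- the product of negative-mode operators along a word -/
def wordProd (σ : AffineFamily V) (e : ℕ ≃ Fin 3 × ℕ) (l : List ℕ) : Module.End ℂ V :=
  (l.map fun i => negMode σ (e i)).prod

lemma wordProd_nil (σ : AffineFamily V) (e : ℕ ≃ Fin 3 × ℕ) : wordProd σ e [] = 1 := rfl

lemma wordProd_cons (σ : AffineFamily V) (e : ℕ ≃ Fin 3 × ℕ) (i : ℕ) (l : List ℕ) :
    wordProd σ e (i :: l) = negMode σ (e i) * wordProd σ e l := by
  simp [wordProd]

lemma wordProd_append (σ : AffineFamily V) (e : ℕ ≃ Fin 3 × ℕ) (p s : List ℕ) :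
    wordProd σ e (p ++ s) = wordProd σ e p * wordProd σ e s := by
  simp [wordProd]

/-- straightening identity for a word with one transposition -/
lemma wordProd_swap {k : ℂ} (σ : AffineFamily V) (hσ : HasBracket k σ) (e : ℕ ≃ Fin 3 × ℕ)
    (p s : List ℕ) (x y : ℕ) :
    wordProd σ e (p ++ x :: y :: s)
      = wordProd σ e (p ++ y :: x :: s)
        + sC (e x).1 (e y).1 •
            wordProd σ e (p ++ (e.symm (sA (e x).1 (e y).1, (e x).2 + (e y).2 + 1)) :: s) := by
  simp only [wordProd_append, wordProd_cons, Equiv.apply_symm_apply]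
  rw [← mul_assoc (negMode σ (e x)), negMode_bracket σ hσ (e x) (e y)]
  rw [add_mul, mul_add, smul_mul_assoc, mul_smul_comm, mul_assoc]

/-- number of inversions of a word -/
def invCount : List ℕ → ℕ
  | [] => 0
  | x :: xs => xs.countP (fun y => decide (x < y)) + invCount xs

lemma invCount_le (l : List ℕ) : invCount l ≤ l.length * l.length := by
  induction l with
  | nil => simp [invCount]
  | cons x xs ih =>
    have h1 : xs.countP (fun y => decide (x < y)) ≤ xs.length := List.countP_le_length
    have h2 : xs.length ≤ (x :: xs).length := by simp
    simp only [invCount, List.length_cons] at *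
    nlinarith

lemma invCount_swap (p s : List ℕ) (x y : ℕ) (h : x < y) :
    invCount (p ++ y :: x :: s) < invCount (p ++ x :: y :: s) := by
  induction p with
  | nil =>
    simp only [List.nil_append, invCount, List.countP_cons]
    have mono : s.countP (fun z => decide (y < z)) ≤ s.countP (fun z => decide (x < z)) := by
      apply List.countP_mono_left
      intro a _ ha
      simp only [decide_eq_true_eq] at *
      omega
    simp only [decide_eq_true_eq]
    rw [if_neg (by omega), if_pos (by omega)]
    omega
  | cons a p ih =>
    have hperm : (p ++ y :: x :: s).Perm (p ++ x :: y :: s) :=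
      List.Perm.append_left p (List.Perm.swap x y s)
    simp only [List.cons_append, invCount, List.append_eq]
    have := hperm.countP_eq (fun z => decide (a < z))
    omega

/-- a word which is not a chain has an adjacent inversion -/
lemma exists_adjacent_inversion {l : List ℕ} (h : ¬ l.Chain' (· ≥ ·)) :
    ∃ p x y s, l = p ++ x :: y :: s ∧ x < y := by
  induction l with
  | nil => exact absurd List.isChain_nil h
  | cons a t ih =>
    by_cases ht : t.Chain' (· ≥ ·)
    · match t with
      | [] => exact absurd (List.isChain_singleton a) h
      | b :: t' =>
        have hab : ¬ a ≥ b := fun hab => h (List.isChain_cons_cons.2 ⟨hab, ht⟩)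
        exact ⟨[], a, b, t', rfl, by omega⟩
    · obtain ⟨p, x, y, s, rfl, hxy⟩ := ih ht
      exact ⟨a :: p, x, y, s, rfl, hxy⟩

/-- measure for the straightening induction -/
def wt (l : List ℕ) : ℕ := l.length ^ 3 + invCount l

lemma wt_swap (p s : List ℕ) (x y : ℕ) (h : x < y) :
    wt (p ++ y :: x :: s) < wt (p ++ x :: y :: s) := by
  have h1 := invCount_swap p s x y h
  have h2 : (p ++ y :: x :: s).length = (p ++ x :: y :: s).length := by simp
  simp only [wt, h2]
  omega

lemma wt_lt_of_length_lt {l l' : List ℕ} (h : l.length < l'.length) : wt l < wt l' := by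
  have h1 := invCount_le l
  have h2 : (l.length + 1) ^ 3 ≤ l'.length ^ 3 := Nat.pow_le_pow_left h 3
  have h3 : (l.length + 1) ^ 3 = l.length ^ 3 + 3 * l.length ^ 2 + 3 * l.length + 1 := by ring
  have h4 : l.length * l.length = l.length ^ 2 := by ring
  simp only [wt]
  omega

lemma wt_shorter (p s : List ℕ) (x y z : ℕ) :
    wt (p ++ z :: s) < wt (p ++ x :: y :: s) :=
  wt_lt_of_length_lt (by simp)

end Aux3
section Aux4
variable {V W : Type*} [AddCommGroup V] [Module ℂ V] [AddCommGroup W] [Module ℂ W]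

lemma curry_equivariant {ρ : AffineFamily V} {ρ' : AffineFamily W}
    {β : (V ⊗[ℂ] W) →ₗ[ℂ] ℂ}
    (hβ : ∀ n : ℤ,
        β ∘ₗ (TensorProduct.map (ρ.Jz n) LinearMap.id
            + TensorProduct.map LinearMap.id (ρ'.Jz (-n))) = 0 ∧
        β ∘ₗ (TensorProduct.map (ρ.Jp n) LinearMap.id
            + TensorProduct.map LinearMap.id (ρ'.Jp (-n))) = 0 ∧
        β ∘ₗ (TensorProduct.map (ρ.Jm n) LinearMap.id
            + TensorProduct.map LinearMap.id (ρ'.Jm (-n))) = 0)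
    (a : Fin 3) (n : ℤ) (x : V) :
    TensorProduct.curry β (mode ρ a n x)
      = mode (dualFam ρ') a n (TensorProduct.curry β x) := by
  ext w
  rw [mode_dualFam_apply]
  fin_cases a
  · have := LinearMap.congr_fun (hβ n).1 (x ⊗ₜ[ℂ] w)
    simp only [LinearMap.comp_apply, LinearMap.add_apply, TensorProduct.map_tmul,
      LinearMap.id_apply, LinearMap.zero_apply, map_add] at this
    simp only [TensorProduct.curry_apply, mode,
      show ((⟨0, by omega⟩ : Fin 3)) = 0 from rfl, Matrix.cons_val_zero]
    linear_combination this
  · have := LinearMap.congr_fun (hβ n).2.1 (x ⊗ₜ[ℂ] w)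
    simp only [LinearMap.comp_apply, LinearMap.add_apply, TensorProduct.map_tmul,
      LinearMap.id_apply, LinearMap.zero_apply, map_add] at this
    simp only [TensorProduct.curry_apply, mode,
      show ((⟨1, by omega⟩ : Fin 3)) = 1 from rfl, Matrix.cons_val_one, Matrix.head_cons,
      Matrix.cons_val_zero]
    linear_combination this
  · have := LinearMap.congr_fun (hβ n).2.2 (x ⊗ₜ[ℂ] w)
    simp only [LinearMap.comp_apply, LinearMap.add_apply, TensorProduct.map_tmul,
      LinearMap.id_apply, LinearMap.zero_apply, map_add] at this
    simp only [TensorProduct.curry_apply, mode,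
      show ((⟨2, by omega⟩ : Fin 3)) = 2 from rfl, Matrix.cons_val_two, Matrix.tail_cons,
      Matrix.head_cons]
    linear_combination this

end Aux4
section Aux4b
variable {V : Type*} [AddCommGroup V] [Module ℂ V]

lemma mode_z (σ : AffineFamily V) (n : ℤ) : mode σ 0 n = σ.Jz n := rfl
lemma mode_p (σ : AffineFamily V) (n : ℤ) : mode σ 1 n = σ.Jp n := rfl
lemma mode_m (σ : AffineFamily V) (n : ℤ) : mode σ 2 n = σ.Jm n := rfl

lemma mode_eq_negMode (σ : AffineFamily V) (a : Fin 3) (n : ℤ) (hn : n < 0) :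
    mode σ a n = negMode σ (a, (-n - 1).toNat) := by
  rw [negMode_eq_mode]
  congr 1
  have : (((-n - 1).toNat : ℤ)) = -n - 1 := Int.toNat_of_nonneg (by omega)
  rw [this]; ring

end Aux4b
section Aux5
variable {V W : Type*} [AddCommGroup V] [Module ℂ V] [AddCommGroup W] [Module ℂ W]

lemma extension_exists (k : ℂ)
    (ρ : AffineFamily V) (hρ : IsLevelRep k ρ)
    (ρ' : AffineFamily W) (hρ' : IsLevelRep k ρ')
    (V₀ : Submodule ℂ V)
    (hann : ∀ n : ℤ, 1 ≤ n → ∀ v ∈ V₀, ρ.Jz n v = 0 ∧ ρ.Jp n v = 0 ∧ ρ.Jm n v = 0)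
    (hz0 : ∀ v ∈ V₀, ρ.Jz 0 v ∈ V₀)
    (hp0 : ∀ v ∈ V₀, ρ.Jp 0 v ∈ V₀)
    (hm0 : ∀ v ∈ V₀, ρ.Jm 0 v ∈ V₀)
    (e : ℕ ≃ Fin 3 × ℕ) {T : Type*} (b0 : Module.Basis T ℂ V₀)
    (b : Module.Basis (T × {l : List ℕ // l.Chain' (· ≥ ·)}) ℂ V)
    (hb : ∀ (t : T) (l : {l : List ℕ // l.Chain' (· ≥ ·)}),
      b (t, l) = ((l.val.map fun i => negMode ρ (e i)).prod) (b0 t : V))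
    (ψ : (V₀ ⊗[ℂ] W) →ₗ[ℂ] ℂ)
    (hψ1 : ψ ∘ₗ (TensorProduct.map ((ρ.Jz 0).restrict hz0) LinearMap.id
            + TensorProduct.map LinearMap.id (ρ'.Jz 0)) = 0)
    (hψ2 : ψ ∘ₗ (TensorProduct.map ((ρ.Jp 0).restrict hp0) LinearMap.id
            + TensorProduct.map LinearMap.id (ρ'.Jp 0)) = 0)
    (hψ3 : ψ ∘ₗ (TensorProduct.map ((ρ.Jm 0).restrict hm0) LinearMap.id
            + TensorProduct.map LinearMap.id (ρ'.Jm 0)) = 0)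
    (hψ4 : ∀ m : ℤ, 1 ≤ m →
          ψ ∘ₗ TensorProduct.map LinearMap.id (ρ'.Jz (-m)) = 0 ∧
          ψ ∘ₗ TensorProduct.map LinearMap.id (ρ'.Jp (-m)) = 0 ∧
          ψ ∘ₗ TensorProduct.map LinearMap.id (ρ'.Jm (-m)) = 0) :
    ∃ β : (V ⊗[ℂ] W) →ₗ[ℂ] ℂ,
      (∀ (a : Fin 3) (n : ℤ) (x : V),
        TensorProduct.curry β (mode ρ a n x)
          = mode (dualFam ρ') a n (TensorProduct.curry β x))
      ∧ β ∘ₗ TensorProduct.map V₀.subtype LinearMap.id = ψ := by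
  classical
  have hBρ : HasBracket k ρ := hρ.hasBracket
  have hBD : HasBracket k (dualFam ρ') := hρ'.hasBracket.dual
  set D := dualFam ρ' with hDdef
  set ψc : V₀ →ₗ[ℂ] Module.Dual ℂ W := TensorProduct.curry ψ with hψcdef
  set g : V →ₗ[ℂ] Module.Dual ℂ W :=
    b.constr ℂ (fun tl => wordProd D e tl.2.val (ψc (b0 tl.1))) with hgdef
  have hb' : ∀ (t : T) (l : List ℕ) (hl : l.Chain' (· ≥ ·)),
      b (t, ⟨l, hl⟩) = wordProd ρ e l ↑(b0 t) := fun t l hl => hb t ⟨l, hl⟩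
  have hgb : ∀ (t : T) (l : List ℕ) (hl : l.Chain' (· ≥ ·)),
      g (wordProd ρ e l ↑(b0 t)) = wordProd D e l (ψc (b0 t)) := by
    intro t l hl
    rw [← hb' t l hl, hgdef, Module.Basis.constr_basis]
  -- straightening : the key induction
  have K1 : ∀ (N : ℕ) (l : List ℕ), wt l ≤ N → ∀ t,
      g (wordProd ρ e l ↑(b0 t)) = wordProd D e l (ψc (b0 t)) := by
    intro N
    induction N with
    | zero =>
      intro l hl t
      have hnil : l = [] := by
        cases l with
        | nil => rfl
        | cons a l =>
          exfalso
          have : 1 ≤ (a :: l).length ^ 3 := by simp [Nat.one_le_iff_ne_zero]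
          simp only [wt] at hl
          omega
      subst hnil
      exact hgb t [] List.isChain_nil
    | succ N ih =>
      intro l hl t
      by_cases hc : l.Chain' (· ≥ ·)
      · exact hgb t l hc
      · obtain ⟨p, x, y, s, rfl, hxy⟩ := exists_adjacent_inversion hc
        have e1 := LinearMap.congr_fun (wordProd_swap ρ hBρ e p s x y) (↑(b0 t) : V)
        have e2 := LinearMap.congr_fun (wordProd_swap D hBD e p s x y) (ψc (b0 t))
        simp only [LinearMap.add_apply, LinearMap.smul_apply] at e1 e2
        rw [e1, map_add, map_smul]
        have m1 : wt (p ++ y :: x :: s) ≤ N := by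
          have := wt_swap p s x y hxy; omega
        have m2 : wt (p ++ (e.symm (sA (e x).1 (e y).1, (e x).2 + (e y).2 + 1)) :: s) ≤ N := by
          have := wt_shorter p s x y (e.symm (sA (e x).1 (e y).1, (e x).2 + (e y).2 + 1))
          omega
        rw [ih _ m1 t, ih _ m2 t, ← e2]
  have K1' : ∀ (l : List ℕ) (t : T),
      g (wordProd ρ e l ↑(b0 t)) = wordProd D e l (ψc (b0 t)) :=
    fun l t => K1 (wt l) l le_rfl t
  -- restriction of g to V₀
  have K2 : ∀ v : V₀, g ↑v = ψc v := by
    have : g ∘ₗ V₀.subtype = ψc := by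
      apply b0.ext
      intro t
      simpa [wordProd_nil] using K1' [] t
    exact fun v => LinearMap.congr_fun this v
  -- negative-mode equivariance everywhere
  have K3 : ∀ (q : Fin 3 × ℕ) (x : V), g (negMode ρ q x) = negMode D q (g x) := by
    intro q
    have : g ∘ₗ negMode ρ q = negMode D q ∘ₗ g := by
      apply b.ext
      rintro ⟨t, l, hl⟩
      simp only [LinearMap.comp_apply]
      rw [hb' t l hl]
      have h1 : negMode ρ q (wordProd ρ e l ↑(b0 t))
          = wordProd ρ e (e.symm q :: l) ↑(b0 t) := by
        rw [wordProd_cons, Equiv.apply_symm_apply, Module.End.mul_apply]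
      rw [h1, K1' (e.symm q :: l) t, K1' l t, wordProd_cons, Equiv.apply_symm_apply,
        Module.End.mul_apply]
    exact fun x => LinearMap.congr_fun this x
  have K3' : ∀ (a : Fin 3) (n : ℤ), n < 0 → ∀ x : V,
      g (mode ρ a n x) = mode D a n (g x) := by
    intro a n hn x
    rw [mode_eq_negMode ρ a n hn, mode_eq_negMode D a n hn]
    exact K3 _ x
  -- zero and positive modes on monomials
  have K4 : ∀ (l : List ℕ) (t : T) (a : Fin 3) (n : ℤ), 0 ≤ n →
      g (mode ρ a n (wordProd ρ e l ↑(b0 t)))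
        = mode D a n (g (wordProd ρ e l ↑(b0 t))) := by
    intro l
    induction l with
    | nil =>
      intro t a n hn
      simp only [wordProd_nil, Module.End.one_apply]
      rcases eq_or_lt_of_le hn with h0 | hpos
      · -- zero modes
        obtain rfl : n = 0 := h0.symm
        ext w
        rw [mode_dualFam_apply, K2 (b0 t)]
        fin_cases a
        · have : (ρ.Jz 0 ↑(b0 t) : V) = ↑((ρ.Jz 0).restrict hz0 (b0 t)) := rfl
          simp only [show ((⟨0, by omega⟩ : Fin 3)) = 0 from rfl,
            show ((⟨1, by omega⟩ : Fin 3)) = 1 from rfl,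
            show ((⟨2, by omega⟩ : Fin 3)) = 2 from rfl]
          rw [mode_z, this, K2]
          have h := LinearMap.congr_fun hψ1 ((b0 t) ⊗ₜ[ℂ] w)
          simp only [LinearMap.comp_apply, LinearMap.add_apply, TensorProduct.map_tmul,
            LinearMap.id_apply, LinearMap.zero_apply, map_add] at h
          simp only [hψcdef, TensorProduct.curry_apply, neg_zero, mode_z]
          linear_combination h
        · have : (ρ.Jp 0 ↑(b0 t) : V) = ↑((ρ.Jp 0).restrict hp0 (b0 t)) := rfl
          simp only [show ((⟨0, by omega⟩ : Fin 3)) = 0 from rfl,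
            show ((⟨1, by omega⟩ : Fin 3)) = 1 from rfl,
            show ((⟨2, by omega⟩ : Fin 3)) = 2 from rfl]
          rw [mode_p, this, K2]
          have h := LinearMap.congr_fun hψ2 ((b0 t) ⊗ₜ[ℂ] w)
          simp only [LinearMap.comp_apply, LinearMap.add_apply, TensorProduct.map_tmul,
            LinearMap.id_apply, LinearMap.zero_apply, map_add] at h
          simp only [hψcdef, TensorProduct.curry_apply, neg_zero, mode_p]
          linear_combination h
        · have : (ρ.Jm 0 ↑(b0 t) : V) = ↑((ρ.Jm 0).restrict hm0 (b0 t)) := rfl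
          simp only [show ((⟨0, by omega⟩ : Fin 3)) = 0 from rfl,
            show ((⟨1, by omega⟩ : Fin 3)) = 1 from rfl,
            show ((⟨2, by omega⟩ : Fin 3)) = 2 from rfl]
          rw [mode_m, this, K2]
          have h := LinearMap.congr_fun hψ3 ((b0 t) ⊗ₜ[ℂ] w)
          simp only [LinearMap.comp_apply, LinearMap.add_apply, TensorProduct.map_tmul,
            LinearMap.id_apply, LinearMap.zero_apply, map_add] at h
          simp only [hψcdef, TensorProduct.curry_apply, neg_zero, mode_m]
          linear_combination h
      · -- strictly positive modes
        have h0 := hann n (by omega) ↑(b0 t) (b0 t).2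
        have hz : mode ρ a n (↑(b0 t) : V) = 0 := by
          fin_cases a
          · exact h0.1
          · exact h0.2.1
          · exact h0.2.2
        rw [hz, map_zero]
        ext w
        rw [mode_dualFam_apply, K2 (b0 t)]
        have h4 := hψ4 n (by omega)
        fin_cases a
        · have h := LinearMap.congr_fun h4.1 ((b0 t) ⊗ₜ[ℂ] w)
          simp only [show ((⟨0, by omega⟩ : Fin 3)) = 0 from rfl,
            show ((⟨1, by omega⟩ : Fin 3)) = 1 from rfl,
            show ((⟨2, by omega⟩ : Fin 3)) = 2 from rfl]
          simp only [LinearMap.comp_apply, TensorProduct.map_tmul, LinearMap.id_apply,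
            LinearMap.zero_apply] at h
          simp only [hψcdef, TensorProduct.curry_apply, mode_z, LinearMap.zero_apply]
          rw [h]; ring
        · have h := LinearMap.congr_fun h4.2.1 ((b0 t) ⊗ₜ[ℂ] w)
          simp only [show ((⟨0, by omega⟩ : Fin 3)) = 0 from rfl,
            show ((⟨1, by omega⟩ : Fin 3)) = 1 from rfl,
            show ((⟨2, by omega⟩ : Fin 3)) = 2 from rfl]
          simp only [LinearMap.comp_apply, TensorProduct.map_tmul, LinearMap.id_apply,
            LinearMap.zero_apply] at h
          simp only [hψcdef, TensorProduct.curry_apply, mode_p, LinearMap.zero_apply]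
          rw [h]; ring
        · have h := LinearMap.congr_fun h4.2.2 ((b0 t) ⊗ₜ[ℂ] w)
          simp only [show ((⟨0, by omega⟩ : Fin 3)) = 0 from rfl,
            show ((⟨1, by omega⟩ : Fin 3)) = 1 from rfl,
            show ((⟨2, by omega⟩ : Fin 3)) = 2 from rfl]
          simp only [LinearMap.comp_apply, TensorProduct.map_tmul, LinearMap.id_apply,
            LinearMap.zero_apply] at h
          simp only [hψcdef, TensorProduct.curry_apply, mode_m, LinearMap.zero_apply]
          rw [h]; ring
    | cons i l IH =>
      intro t a n hn
      rw [wordProd_cons, Module.End.mul_apply]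
      set y : V := wordProd ρ e l ↑(b0 t) with hy
      set bi : Fin 3 := (e i).1 with hbi
      set ni : ℤ := -(((e i).2 : ℤ) + 1) with hni
      have hXmode : negMode ρ (e i) = mode ρ bi ni := by
        rw [negMode_eq_mode]
      have hXmodeD : negMode D (e i) = mode D bi ni := by
        rw [negMode_eq_mode]
      -- apply the bracket in ρ to y
      have hbr := LinearMap.congr_fun (hBρ a bi n ni) y
      simp only [LinearMap.sub_apply, LinearMap.add_apply, LinearMap.smul_apply,
        Module.End.mul_apply, Module.End.one_apply] at hbr
      -- hbr : mode ρ a n (mode ρ bi ni y) - mode ρ bi ni (mode ρ a n y)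
      --       = sC a bi • mode ρ (sA a bi) (n + ni) y + (if ..) • y
      have hgoal1 : g (mode ρ a n (negMode ρ (e i) y))
          = g (mode ρ bi ni (mode ρ a n y))
            + sC a bi • g (mode ρ (sA a bi) (n + ni) y)
            + (if n + ni = 0 then sK a bi * k * (n : ℂ) else 0) • g y := by
        rw [hXmode]
        rw [show mode ρ a n (mode ρ bi ni y)
            = mode ρ bi ni (mode ρ a n y)
              + (sC a bi • mode ρ (sA a bi) (n + ni) y
                + (if n + ni = 0 then sK a bi * k * (n : ℂ) else 0) • y) by
          linear_combination (norm := module) hbr]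
        simp only [map_add, map_smul]
        abel
      rw [hgoal1]
      -- rewrite each term on the D side
      have t1 : g (mode ρ bi ni (mode ρ a n y)) = mode D bi ni (mode D a n (g y)) := by
        rw [K3' bi ni (by omega) _, IH t a n hn]
      have t2 : g (mode ρ (sA a bi) (n + ni) y) = mode D (sA a bi) (n + ni) (g y) := by
        rcases le_or_gt 0 (n + ni) with hc | hc
        · exact IH t _ _ hc
        · exact K3' _ _ hc y
      rw [t1, t2]
      -- bracket in D applied to g y
      have hbrD := LinearMap.congr_fun (hBD a bi n ni) (g y)
      simp only [LinearMap.sub_apply, LinearMap.add_apply, LinearMap.smul_apply,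
        Module.End.mul_apply, Module.End.one_apply] at hbrD
      have : g (negMode ρ (e i) y) = mode D bi ni (g y) := by
        rw [hXmode]; exact K3' bi ni (by omega) y
      rw [this]
      rw [sub_eq_iff_eq_add] at hbrD
      rw [hbrD]
      abel
  -- full equivariance
  have K5 : ∀ (a : Fin 3) (n : ℤ) (x : V),
      g (mode ρ a n x) = mode D a n (g x) := by
    intro a n
    rcases lt_or_ge n 0 with hn | hn
    · exact K3' a n hn
    · have : g ∘ₗ mode ρ a n = mode D a n ∘ₗ g := by
        apply b.ext
        rintro ⟨t, l, hl⟩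
        simp only [LinearMap.comp_apply]
        rw [hb' t l hl]
        exact K4 l t a n hn
      exact fun x => LinearMap.congr_fun this x
  -- assemble β
  refine ⟨TensorProduct.lift g, ?_, ?_⟩
  · have hcurry : TensorProduct.curry (TensorProduct.lift g) = g := by
      ext x w
      simp [TensorProduct.curry_apply]
    rw [hcurry]
    exact K5
  · apply TensorProduct.ext'
    intro v w
    simp only [LinearMap.comp_apply, TensorProduct.map_tmul, LinearMap.id_apply,
      Submodule.subtype_apply, TensorProduct.lift.tmul]
    rw [K2 v]
    simp [hψcdef, TensorProduct.curry_apply]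
end Aux5
/-- **Beauville's propagation lemma for the points `0`, `∞` on
`ℂP¹`.**  Let `{J'^a_n}` on `W` be a level-`k` representation, and `{J^a_n}` on `V`
a level-`k` representation with a subspace `V₀` annihilated by all positive modes and
preserved by the zero modes, such that `V` is free over the negative modes: for some
enumeration `X₁, X₂, …` of `{J^a_{−n} : n ≥ 1}` (via a bijection `e`) and a basis
`{v_t}` of `V₀`, the vectors `X_{i₁}⋯X_{i_r} v_t` over all non-increasing index
sequences form a basis of `V`.  Then restriction of functionals `β ↦ β|_{V₀⊗W}` is a
linear isomorphism from the space of two-point conformal blocks on `V ⊗ W` onto the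
space of functionals `ψ` on `V₀ ⊗ W` killed by the diagonal zero modes and by
`id ⊗ J'^a_{−m}` for `m ≥ 1`. -/
theorem statement15 (k : ℂ) [AddCommGroup V] [Module ℂ V] [AddCommGroup W] [Module ℂ W]
    (ρ : AffineFamily V) (hρ : IsLevelRep k ρ)
    (ρ' : AffineFamily W) (hρ' : IsLevelRep k ρ')
    (V₀ : Submodule ℂ V)
    (hann : ∀ n : ℤ, 1 ≤ n → ∀ v ∈ V₀, ρ.Jz n v = 0 ∧ ρ.Jp n v = 0 ∧ ρ.Jm n v = 0)
    (hz0 : ∀ v ∈ V₀, ρ.Jz 0 v ∈ V₀)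
    (hp0 : ∀ v ∈ V₀, ρ.Jp 0 v ∈ V₀)
    (hm0 : ∀ v ∈ V₀, ρ.Jm 0 v ∈ V₀)
    (e : ℕ ≃ Fin 3 × ℕ) {T : Type*} (b0 : Module.Basis T ℂ V₀)
    (b : Module.Basis (T × {l : List ℕ // l.Chain' (· ≥ ·)}) ℂ V)
    (hb : ∀ (t : T) (l : {l : List ℕ // l.Chain' (· ≥ ·)}),
      b (t, l) = ((l.val.map fun i => negMode ρ (e i)).prod) (b0 t : V)) :
    Set.BijOn
      (fun β : (V ⊗[ℂ] W) →ₗ[ℂ] ℂ => β ∘ₗ TensorProduct.map V₀.subtype LinearMap.id)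
      {β : (V ⊗[ℂ] W) →ₗ[ℂ] ℂ | ∀ n : ℤ,
        β ∘ₗ (TensorProduct.map (ρ.Jz n) LinearMap.id
            + TensorProduct.map LinearMap.id (ρ'.Jz (-n))) = 0 ∧
        β ∘ₗ (TensorProduct.map (ρ.Jp n) LinearMap.id
            + TensorProduct.map LinearMap.id (ρ'.Jp (-n))) = 0 ∧
        β ∘ₗ (TensorProduct.map (ρ.Jm n) LinearMap.id
            + TensorProduct.map LinearMap.id (ρ'.Jm (-n))) = 0}
      {ψ : (V₀ ⊗[ℂ] W) →ₗ[ℂ] ℂ |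
        (ψ ∘ₗ (TensorProduct.map ((ρ.Jz 0).restrict hz0) LinearMap.id
            + TensorProduct.map LinearMap.id (ρ'.Jz 0)) = 0) ∧
        (ψ ∘ₗ (TensorProduct.map ((ρ.Jp 0).restrict hp0) LinearMap.id
            + TensorProduct.map LinearMap.id (ρ'.Jp 0)) = 0) ∧
        (ψ ∘ₗ (TensorProduct.map ((ρ.Jm 0).restrict hm0) LinearMap.id
            + TensorProduct.map LinearMap.id (ρ'.Jm 0)) = 0) ∧
        ∀ m : ℤ, 1 ≤ m →
          ψ ∘ₗ TensorProduct.map LinearMap.id (ρ'.Jz (-m)) = 0 ∧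
          ψ ∘ₗ TensorProduct.map LinearMap.id (ρ'.Jp (-m)) = 0 ∧
          ψ ∘ₗ TensorProduct.map LinearMap.id (ρ'.Jm (-m)) = 0} := by
  classical
  refine ⟨?_, ?_, ?_⟩
  · -- MapsTo
    intro β hβ
    refine ⟨?_, ?_, ?_, ?_⟩
    · apply TensorProduct.ext'
      intro v w
      have h := LinearMap.congr_fun (hβ 0).1 ((v : V) ⊗ₜ[ℂ] w)
      simp only [LinearMap.comp_apply, LinearMap.add_apply, TensorProduct.map_tmul,
        LinearMap.id_apply, LinearMap.zero_apply, map_add, neg_zero,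
        Submodule.subtype_apply] at h ⊢
      have hr : (((ρ.Jz 0).restrict hz0 v : V₀) : V) = ρ.Jz 0 (v : V) := rfl
      rw [hr]
      linear_combination h
    · apply TensorProduct.ext'
      intro v w
      have h := LinearMap.congr_fun (hβ 0).2.1 ((v : V) ⊗ₜ[ℂ] w)
      simp only [LinearMap.comp_apply, LinearMap.add_apply, TensorProduct.map_tmul,
        LinearMap.id_apply, LinearMap.zero_apply, map_add, neg_zero,
        Submodule.subtype_apply] at h ⊢
      have hr : (((ρ.Jp 0).restrict hp0 v : V₀) : V) = ρ.Jp 0 (v : V) := rfl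
      rw [hr]
      linear_combination h
    · apply TensorProduct.ext'
      intro v w
      have h := LinearMap.congr_fun (hβ 0).2.2 ((v : V) ⊗ₜ[ℂ] w)
      simp only [LinearMap.comp_apply, LinearMap.add_apply, TensorProduct.map_tmul,
        LinearMap.id_apply, LinearMap.zero_apply, map_add, neg_zero,
        Submodule.subtype_apply] at h ⊢
      have hr : (((ρ.Jm 0).restrict hm0 v : V₀) : V) = ρ.Jm 0 (v : V) := rfl
      rw [hr]
      linear_combination h
    · intro m hm
      refine ⟨?_, ?_, ?_⟩
      · apply TensorProduct.ext'
        intro v w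
        have h := LinearMap.congr_fun (hβ m).1 ((v : V) ⊗ₜ[ℂ] w)
        have h0 : ρ.Jz m (v : V) = 0 := (hann m hm (v : V) v.2).1
        simp only [LinearMap.comp_apply, LinearMap.add_apply, TensorProduct.map_tmul,
          LinearMap.id_apply, LinearMap.zero_apply, map_add, h0,
          TensorProduct.zero_tmul, map_zero, zero_add, Submodule.subtype_apply] at h ⊢
        exact h
      · apply TensorProduct.ext'
        intro v w
        have h := LinearMap.congr_fun (hβ m).2.1 ((v : V) ⊗ₜ[ℂ] w)
        have h0 : ρ.Jp m (v : V) = 0 := (hann m hm (v : V) v.2).2.1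
        simp only [LinearMap.comp_apply, LinearMap.add_apply, TensorProduct.map_tmul,
          LinearMap.id_apply, LinearMap.zero_apply, map_add, h0,
          TensorProduct.zero_tmul, map_zero, zero_add, Submodule.subtype_apply] at h ⊢
        exact h
      · apply TensorProduct.ext'
        intro v w
        have h := LinearMap.congr_fun (hβ m).2.2 ((v : V) ⊗ₜ[ℂ] w)
        have h0 : ρ.Jm m (v : V) = 0 := (hann m hm (v : V) v.2).2.2
        simp only [LinearMap.comp_apply, LinearMap.add_apply, TensorProduct.map_tmul,
          LinearMap.id_apply, LinearMap.zero_apply, map_add, h0,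
          TensorProduct.zero_tmul, map_zero, zero_add, Submodule.subtype_apply] at h ⊢
        exact h
  · -- InjOn
    intro β1 h1 β2 h2 hres
    have E1 := curry_equivariant h1
    have E2 := curry_equivariant h2
    have key : ∀ (l : List ℕ) (t : T),
        TensorProduct.curry β1 (wordProd ρ e l ↑(b0 t))
          = TensorProduct.curry β2 (wordProd ρ e l ↑(b0 t)) := by
      intro l
      induction l with
      | nil =>
        intro t
        simp only [wordProd_nil, Module.End.one_apply]
        ext w
        have h := LinearMap.congr_fun hres (((b0 t) : V₀) ⊗ₜ[ℂ] w)
        simpa only [LinearMap.comp_apply, TensorProduct.map_tmul, LinearMap.id_apply,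
          Submodule.subtype_apply, TensorProduct.curry_apply] using h
      | cons i l IH =>
        intro t
        rw [wordProd_cons, Module.End.mul_apply, negMode_eq_mode, E1, E2, IH t]
    have hcur : TensorProduct.curry β1 = TensorProduct.curry β2 := by
      apply b.ext
      rintro ⟨t, l, hl⟩
      have hb' : b (t, ⟨l, hl⟩) = wordProd ρ e l ↑(b0 t) := hb t ⟨l, hl⟩
      rw [hb']
      exact key l t
    apply TensorProduct.ext'
    intro x w
    exact LinearMap.congr_fun (LinearMap.congr_fun hcur x) w
  · -- SurjOn
    intro ψ hψ
    obtain ⟨hψ1, hψ2, hψ3, hψ4⟩ := hψ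
    obtain ⟨β, hequiv, hrest⟩ :=
      extension_exists k ρ hρ ρ' hρ' V₀ hann hz0 hp0 hm0 e b0 b hb ψ hψ1 hψ2 hψ3 hψ4
    refine ⟨β, ?_, hrest⟩
    intro n
    refine ⟨?_, ?_, ?_⟩
    · apply TensorProduct.ext'
      intro x w
      have h := LinearMap.congr_fun (hequiv 0 n x) w
      rw [mode_dualFam_apply] at h
      simp only [mode_z, TensorProduct.curry_apply] at h
      simp only [LinearMap.comp_apply, LinearMap.add_apply, TensorProduct.map_tmul,
        LinearMap.id_apply, LinearMap.zero_apply, map_add]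
      linear_combination h
    · apply TensorProduct.ext'
      intro x w
      have h := LinearMap.congr_fun (hequiv 1 n x) w
      rw [mode_dualFam_apply] at h
      simp only [mode_p, TensorProduct.curry_apply] at h
      simp only [LinearMap.comp_apply, LinearMap.add_apply, TensorProduct.map_tmul,
        LinearMap.id_apply, LinearMap.zero_apply, map_add]
      linear_combination h
    · apply TensorProduct.ext'
      intro x w
      have h := LinearMap.congr_fun (hequiv 2 n x) w
      rw [mode_dualFam_apply] at h
      simp only [mode_m, TensorProduct.curry_apply] at h
      simp only [LinearMap.comp_apply, LinearMap.add_apply, TensorProduct.map_tmul,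
        LinearMap.id_apply, LinearMap.zero_apply, map_add]
      linear_combination h
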